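/- Let E be an F₂-vector space of dimension n ≥ 4, ℰ the affine space over E, 𝒢 its affine group, and s : GL(E) → 𝒢 a section of the projection 𝒢 → GL(E). If s is not of the form f ↦ f_a for any point a ∈ ℰ, then the subgroup s(GL(E)) acts transitively on ℰ. -/

import Mathlib

private lemma zpow_fix {k E : Type*} [Ring k] [AddCommGroup E] [Module k E]
    (φ : E ≃ᵃ[k] E) (a : E) (h : φ a = a) : ∀ m : ℤ, (φ ^ m) a = a := by
  have hn : ∀ m : ℕ, (φ ^ m) a = a := by
    intro m
    induction m with
    | zero => simp
    | succ m ih => rw [pow_succ, AffineEquiv.coe_mul, Function.comp_apply, h, ih]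
  intro m
  induction m using Int.rec with
  | ofNat m => exact hn m
  | negSucc m =>
    have hexp : ((m + 1 : ℕ) : ℤ) + Int.negSucc m = 0 := by
      rw [Int.negSucc_eq]; push_cast; ring
    have key : (φ ^ ((m + 1 : ℕ) : ℤ) * φ ^ (Int.negSucc m)) a = a := by
      rw [← zpow_add, hexp, zpow_zero]; rfl
    have : (φ ^ ((m + 1 : ℕ) : ℤ)) ((φ ^ (Int.negSucc m)) a) = (φ ^ ((m + 1 : ℕ) : ℤ)) a := by
      rw [zpow_natCast, hn (m + 1)]
      exact key
    exact (φ ^ ((m + 1 : ℕ) : ℤ)).injective this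

private lemma affine_apply {k E : Type*} [Ring k] [AddCommGroup E] [Module k E]
    (φ : E ≃ᵃ[k] E) (x y : E) : φ x = φ.linear (x - y) + φ y := by
  have := φ.map_vadd y (x - y)
  simpa [vadd_eq_add, sub_add_cancel] using this

/-- Let `E` be an `F₂`-vector space of dimension `n ≥ 4`, viewed as an affine
space over itself, and `s` a section of the projection from the affine group
of `E` to `GL(E)`.  If `s` is not of the form `f ↦ f_a` for any point `a`
(i.e. its image fixes no point), then `s(GL(E))` acts transitively on `E`. -/
theorem stmt_18 (E : Type*) [AddCommGroup E] [Module (ZMod 2) E]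
    [FiniteDimensional (ZMod 2) E] (hdim : 4 ≤ Module.finrank (ZMod 2) E)
    (s : (E ≃ₗ[ZMod 2] E) →* (E ≃ᵃ[ZMod 2] E))
    (hs : ∀ f : E ≃ₗ[ZMod 2] E, (s f).linear = f)
    (hnofix : ¬∃ a : E, ∀ f : E ≃ₗ[ZMod 2] E, s f a = a) :
    ∀ x y : E, ∃ f : E ≃ₗ[ZMod 2] E, s f x = y := by
  classical
  -- the relation `∃ f, s f x = y` is an equivalence relation
  set r : E → E → Prop := fun x y => ∃ f : E ≃ₗ[ZMod 2] E, s f x = y with hr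
  have hrefl : ∀ x, r x x := fun x => ⟨1, by simp⟩
  have htrans : ∀ {x y z}, r x y → r y z → r x z := by
    rintro x y z ⟨f, hf⟩ ⟨g, hg⟩
    exact ⟨g * f, by rw [map_mul, AffineEquiv.coe_mul, Function.comp_apply, hf, hg]⟩
  have hsymm : ∀ {x y}, r x y → r y x := by
    rintro x y ⟨f, hf⟩
    refine ⟨f⁻¹, ?_⟩
    have h1 : (s f⁻¹ * s f) x = x := by rw [← map_mul]; simp
    rw [← hf]
    exact h1
  set n := Module.finrank (ZMod 2) E with hn
  have hn0 : n ≠ 0 := by omega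
  set K := GaloisField 2 n with hK
  letI : Fintype K := Fintype.ofFinite K
  -- a linear iso `E ≃ K`
  have hfr : Module.finrank (ZMod 2) E = Module.finrank (ZMod 2) K := by
    rw [GaloisField.finrank 2 hn0]
  let e : E ≃ₗ[ZMod 2] K := LinearEquiv.ofFinrankEq E K hfr
  -- multiplication by units of K, as ZMod 2-linear automorphisms of E
  let T : Kˣ →* (E ≃ₗ[ZMod 2] E) :=
    { toFun := fun u =>
        { toFun := fun x => e.symm ((u : K) * e x)
          invFun := fun x => e.symm ((u⁻¹ : Kˣ) * e x)
          map_add' := by intro x y; simp [mul_add]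
          map_smul' := by intro c x; simp [Algebra.mul_smul_comm]
          left_inv := by intro x; simp [← mul_assoc]
          right_inv := by intro x; simp [← mul_assoc] }
      map_one' := by ext x; simp
      map_mul' := by
        intro u v
        ext x
        show e.symm (((u * v : Kˣ) : K) * e x) = e.symm ((u : K) * e (e.symm ((v : K) * e x)))
        rw [LinearEquiv.apply_symm_apply, Units.val_mul, mul_assoc] }
  have hT : ∀ (u : Kˣ) (x : E), T u x = e.symm ((u : K) * e x) := fun _ _ => rfl
  -- a generator of Kˣ
  obtain ⟨g, hg⟩ := IsCyclic.exists_generator (α := Kˣ)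
  have hcard : Fintype.card K = 2 ^ n := by
    rw [← Nat.card_eq_fintype_card]; exact GaloisField.card 2 n hn0
  have hg1 : (g : K) ≠ 1 := by
    intro h1
    have hall : ∀ u : Kˣ, (u : K) = 1 := by
      intro u
      obtain ⟨m, hm⟩ := hg u
      rw [← hm, Units.val_zpow_eq_zpow_val, h1, one_zpow]
    have hcard2 : 1 < Fintype.card Kˣ := by
      rw [Fintype.card_units, hcard]
      have : 16 ≤ 2 ^ n := by
        calc (16 : ℕ) = 2 ^ 4 := by norm_num
        _ ≤ 2 ^ n := Nat.pow_le_pow_right (by norm_num) (by omega)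
      omega
    obtain ⟨u, v, huv⟩ := Fintype.exists_pair_of_one_lt_card hcard2
    exact huv (Units.ext (by rw [hall u, hall v]))
  -- the section applied to the Singer cycle group
  set S : Kˣ →* (E ≃ᵃ[ZMod 2] E) := s.comp T with hS
  have hSlin : ∀ u : Kˣ, (S u).linear = T u := fun u => hs (T u)
  -- fixed point of S g
  set γ : K := e (S g 0) with hγ
  set a : E := e.symm ((1 - (g : K))⁻¹ * γ) with ha
  have hga : (g : K) * e a + γ = e a := by
    rw [ha, LinearEquiv.apply_symm_apply]
    have h1g : (1 - (g : K)) ≠ 0 := sub_ne_zero.mpr (Ne.symm hg1)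
    linear_combination (-γ) * mul_inv_cancel₀ h1g
  have hfixg : S g a = a := by
    have hd := affine_apply (S g) a 0
    rw [sub_zero] at hd
    rw [hd, hSlin g, hT g a]
    apply e.injective
    simp only [map_add, LinearEquiv.apply_symm_apply]
    rw [← hγ]
    exact hga
  have hfix : ∀ u : Kˣ, S u a = a := by
    intro u
    obtain ⟨m, hm⟩ := hg u
    rw [← hm, map_zpow]
    exact zpow_fix (S g) a hfixg m
  -- transitivity on E \ {a}
  have hmove : ∀ x y : E, x ≠ a → y ≠ a → r x y := by
    intro x y hx hy
    have hxa : e (x - a) ≠ 0 := fun h =>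
      hx (sub_eq_zero.mp (by simpa using e.injective (by simpa using h)))
    have hya : e (y - a) ≠ 0 := fun h =>
      hy (sub_eq_zero.mp (by simpa using e.injective (by simpa using h)))
    set u : Kˣ := (Units.mk0 (e (y - a)) hya) * (Units.mk0 (e (x - a)) hxa)⁻¹ with hu
    refine ⟨T u, ?_⟩
    show S u x = y
    rw [affine_apply (S u) x a, hfix u, hSlin u, hT u (x - a)]
    apply e.injective
    simp only [map_add, LinearEquiv.apply_symm_apply]
    have hval : (u : K) * e (x - a) = e (y - a) := by
      rw [hu, Units.val_mul, Units.val_inv_eq_inv_val, Units.val_mk0, Units.val_mk0,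
        mul_assoc, inv_mul_cancel₀ hxa, mul_one]
    rw [hval]
    simp [map_sub]
  -- a is moved by some element
  push_neg at hnofix
  obtain ⟨f₀, hf₀⟩ := hnofix a
  set b : E := s f₀ a with hb
  have hba : b ≠ a := hf₀
  have hab : r a b := ⟨f₀, rfl⟩
  -- conclude
  intro x y
  by_cases hx : x = a
  · by_cases hy : y = a
    · rw [hx, hy]; exact hrefl a
    · exact hx ▸ htrans hab (hmove b y hba hy)
  · by_cases hy : y = a
    · exact hy ▸ hsymm (htrans hab (hmove b x hba hx))
    · exact hmove x y hx hy
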